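/- Let X be a real Banach space, let f₁, …, f_k : X → ℝ be DC functions, and let f : X → ℝ be continuous with f(x) ∈ {f₁(x), …, f_k(x)} for every x ∈ X. Then f is DC. -/

import Mathlib

open Metric Filter Topology

/-- A function `f : X → ℝ` is DC (delta-convex) if it is the difference of two convex
functions on `X`. -/
def IsDC {X : Type*} [NormedAddCommGroup X] [NormedSpace ℝ X] (f : X → ℝ) : Prop :=
  ∃ g h : X → ℝ, ConvexOn ℝ Set.univ g ∧ ConvexOn ℝ Set.univ h ∧ ∀ x, f x = g x - h x

/-- Pointwise sum of finitely many convex functions is convex. -/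
lemma convexOn_finset_sum' {E : Type*} [NormedAddCommGroup E] [NormedSpace ℝ E]
    {ι : Type*} (t : Finset ι) (f : ι → E → ℝ)
    (hf : ∀ i ∈ t, ConvexOn ℝ Set.univ (f i)) :
    ConvexOn ℝ Set.univ (fun x => ∑ i ∈ t, f i x) := by
  classical
  induction t using Finset.cons_induction with
  | empty => simpa using convexOn_const (0 : ℝ) convex_univ
  | cons a s ha ih =>
    simp only [Finset.sum_cons]
    exact (hf a (Finset.mem_cons_self a s)).add
      (ih fun i hi => hf i (Finset.mem_cons_of_mem hi))

/-- Pointwise max of two convex functions is convex. -/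
lemma convexOn_max' {E : Type*} [NormedAddCommGroup E] [NormedSpace ℝ E]
    {f g : E → ℝ} (hf : ConvexOn ℝ Set.univ f) (hg : ConvexOn ℝ Set.univ g) :
    ConvexOn ℝ Set.univ (fun x => max (f x) (g x)) :=
  hf.sup hg

/-- The 1-dimensional core lemma: if `F` is a continuous selection on `[0,1]` of
convex functions `u i : ℝ → ℝ`, and `φ = ∑ pairs (i,j), max (u i) (u j)`, then
`φ + F` satisfies the convexity chord inequality over `[0,1]`. -/
lemma core_one_dim (k : ℕ) (u : Fin k → ℝ → ℝ)
    (hu : ∀ i, ConvexOn ℝ Set.univ (u i))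
    (F : ℝ → ℝ) (hF : Continuous F)
    (hsel : ∀ s ∈ Set.Icc (0:ℝ) 1, ∃ i, F s = u i s)
    {b : ℝ} (hb : b ∈ Set.Icc (0:ℝ) 1) :
    (∑ p : Fin k × Fin k, max (u p.1 b) (u p.2 b)) + F b ≤
      (1 - b) * ((∑ p : Fin k × Fin k, max (u p.1 0) (u p.2 0)) + F 0) +
      b * ((∑ p : Fin k × Fin k, max (u p.1 1) (u p.2 1)) + F 1) := by
  classical
  have huc : ∀ i, Continuous (u i) := fun i =>
    continuousOn_univ.mp ((hu i).continuousOn isOpen_univ)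
  set φ : ℝ → ℝ := fun s => ∑ p : Fin k × Fin k, max (u p.1 s) (u p.2 s) with hφdef
  have hφc : Continuous φ := by
    apply continuous_finset_sum
    intro p _
    exact (huc p.1).max (huc p.2)
  set ψ : ℝ → ℝ := fun s => φ s + F s with hψdef
  have hψc : Continuous ψ := hφc.add hF
  set L : ℝ → ℝ := fun s => (1 - s) * ψ 0 + s * ψ 1 with hLdef
  have hLc : Continuous L := by fun_prop
  set h : ℝ → ℝ := fun s => ψ s - L s with hhdef
  have hhc : Continuous h := hψc.sub hLc
  have h0 : h 0 = 0 := by simp [hhdef, hLdef]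
  have h1 : h 1 = 0 := by simp [hhdef, hLdef]
  by_contra hcon
  push_neg at hcon
  have hbpos : 0 < h b := by
    simp only [hhdef, hLdef, hψdef, hφdef]
    linarith [hcon]
  -- maximizer of h on [0,1]
  obtain ⟨σ₀, hσ₀mem, hσ₀max⟩ :=
    isCompact_Icc.exists_isMaxOn (Set.nonempty_Icc.2 zero_le_one) hhc.continuousOn
  set M : ℝ := h σ₀ with hMdef
  have hMb : h b ≤ M := (hσ₀max hb : h b ≤ h σ₀)
  have hMpos : 0 < M := lt_of_lt_of_le hbpos hMb
  -- largest maximizer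
  set E : Set ℝ := Set.Icc 0 1 ∩ h ⁻¹' {M} with hEdef
  have hEclosed : IsClosed E := isClosed_Icc.inter (isClosed_singleton.preimage hhc)
  have hEne : E.Nonempty := ⟨σ₀, hσ₀mem, rfl⟩
  have hEbdd : BddAbove E := ⟨1, fun s hs => hs.1.2⟩
  set σ : ℝ := sSup E with hσdef
  have hσE : σ ∈ E := hEclosed.csSup_mem hEne hEbdd
  have hσIcc : σ ∈ Set.Icc (0:ℝ) 1 := hσE.1
  have hσM : h σ = M := hσE.2
  have hσpos : 0 < σ := by
    rcases lt_or_eq_of_le hσIcc.1 with h' | h'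
    · exact h'
    · exfalso; rw [← h'] at hσM; rw [h0] at hσM; linarith
  have hσlt1 : σ < 1 := by
    rcases lt_or_eq_of_le hσIcc.2 with h' | h'
    · exact h'
    · exfalso; rw [h'] at hσM; rw [h1] at hσM; linarith
  have hltM : ∀ s ∈ Set.Icc (0:ℝ) 1, σ < s → h s < M := by
    intro s hs hσs
    have hle : h s ≤ h σ₀ := hσ₀max hs
    rcases lt_or_eq_of_le hle with h' | h'
    · exact h'
    · exfalso
      have : s ∈ E := ⟨hs, h'⟩
      exact absurd (le_csSup hEbdd this) (not_le.2 hσs)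
  -- a branch active just to the left of σ
  have hfreqL : ∃ i : Fin k, ∃ᶠ s in 𝓝[<] σ, F s = u i s ∧ s ∈ Set.Icc (0:ℝ) 1 := by
    by_contra hnone
    push_neg at hnone
    have hev : ∀ᶠ s in 𝓝[<] σ, ∀ i : Fin k, ¬(F s = u i s ∧ s ∈ Set.Icc (0:ℝ) 1) :=
      Filter.eventually_all.2 fun i => (hnone i).mono fun s hs hh => hs hh.1 hh.2
    have hev2 : ∀ᶠ s in 𝓝[<] σ, s ∈ Set.Icc (0:ℝ) 1 := by
      filter_upwards [Ioo_mem_nhdsLT hσpos] with s hs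
      exact ⟨le_of_lt hs.1, le_trans (le_of_lt hs.2) hσIcc.2⟩
    have hev3 : ∀ᶠ s in 𝓝[<] σ, ∃ i : Fin k, F s = u i s ∧ s ∈ Set.Icc (0:ℝ) 1 := by
      filter_upwards [hev2] with s hs
      obtain ⟨i, hi⟩ := hsel s hs
      exact ⟨i, hi, hs⟩
    obtain ⟨s, hs1, hs2⟩ := (hev3.and hev).exists
    obtain ⟨i, hi⟩ := hs1
    exact hs2 i hi
  obtain ⟨i, hfi⟩ := hfreqL
  -- a branch active just to the right of σ
  have hfreqR : ∃ j : Fin k, ∃ᶠ s in 𝓝[>] σ, F s = u j s ∧ s ∈ Set.Icc (0:ℝ) 1 := by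
    by_contra hnone
    push_neg at hnone
    have hev : ∀ᶠ s in 𝓝[>] σ, ∀ j : Fin k, ¬(F s = u j s ∧ s ∈ Set.Icc (0:ℝ) 1) :=
      Filter.eventually_all.2 fun j => (hnone j).mono fun s hs hh => hs hh.1 hh.2
    have hev2 : ∀ᶠ s in 𝓝[>] σ, s ∈ Set.Icc (0:ℝ) 1 := by
      filter_upwards [Ioo_mem_nhdsGT hσlt1] with s hs
      exact ⟨le_trans hσIcc.1 (le_of_lt hs.1), le_of_lt hs.2⟩
    have hev3 : ∀ᶠ s in 𝓝[>] σ, ∃ j : Fin k, F s = u j s ∧ s ∈ Set.Icc (0:ℝ) 1 := by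
      filter_upwards [hev2] with s hs
      obtain ⟨j, hj⟩ := hsel s hs
      exact ⟨j, hj, hs⟩
    obtain ⟨s, hs1, hs2⟩ := (hev3.and hev).exists
    obtain ⟨j, hj⟩ := hs1
    exact hs2 j hj
  obtain ⟨j, hfj⟩ := hfreqR
  -- F σ equals both branches at σ
  have hclosed_i : IsClosed {s : ℝ | F s = u i s} := isClosed_eq hF (huc i)
  have hclosed_j : IsClosed {s : ℝ | F s = u j s} := isClosed_eq hF (huc j)
  have hσi : F σ = u i σ := by
    have : σ ∈ closure {s : ℝ | F s = u i s} := by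
      rw [mem_closure_iff_frequently]
      exact ((hfi.filter_mono nhdsWithin_le_nhds).mono fun s hs => hs.1)
    exact hclosed_i.closure_subset this
  have hσj : F σ = u j σ := by
    have : σ ∈ closure {s : ℝ | F s = u j s} := by
      rw [mem_closure_iff_frequently]
      exact ((hfj.filter_mono nhdsWithin_le_nhds).mono fun s hs => hs.1)
    exact hclosed_j.closure_subset this
  -- sample points
  obtain ⟨s₁, hs₁P, hs₁lt⟩ := (hfi.and_eventually eventually_mem_nhdsWithin).exists
  obtain ⟨s₂, hs₂P, hs₂gt⟩ := (hfj.and_eventually eventually_mem_nhdsWithin).exists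
  have hs₁lt' : s₁ < σ := hs₁lt
  have hs₂gt' : σ < s₂ := hs₂gt
  have hs₁F : F s₁ = u i s₁ := hs₁P.1
  have hs₂F : F s₂ = u j s₂ := hs₂P.1
  have hs₁M : h s₁ ≤ M := (hσ₀max hs₁P.2 : h s₁ ≤ h σ₀)
  have hs₂M : h s₂ < M := hltM s₂ hs₂P.2 hs₂gt'
  -- split φ into the (i,j)-term and the rest
  set m : ℝ → ℝ := fun s => max (u i s) (u j s) with hmdef
  set φr : ℝ → ℝ := fun s =>
    ∑ p ∈ Finset.univ.erase ((i, j) : Fin k × Fin k), max (u p.1 s) (u p.2 s) with hφrdef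
  have hsplit : ∀ s, φ s = m s + φr s := by
    intro s
    rw [hφdef, hmdef, hφrdef]
    exact (Finset.add_sum_erase _ _ (Finset.mem_univ ((i, j) : Fin k × Fin k))).symm
  have hmconv : ConvexOn ℝ Set.univ m := convexOn_max' (hu i) (hu j)
  have hφrconv : ConvexOn ℝ Set.univ φr :=
    convexOn_finset_sum' _ _ fun p _ => convexOn_max' (hu p.1) (hu p.2)
  have hd1 : (0:ℝ) < σ - s₁ := by linarith
  have hd2 : (0:ℝ) < s₂ - σ := by linarith
  -- slope inequalities
  have slope_r : (φr σ - φr s₁) / (σ - s₁) ≤ (φr s₂ - φr σ) / (s₂ - σ) :=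
    hφrconv.slope_mono_adjacent (Set.mem_univ s₁) (Set.mem_univ s₂) hs₁lt' hs₂gt'
  have slope_i : (u i σ - u i s₁) / (σ - s₁) ≤ (u i s₂ - u i σ) / (s₂ - σ) :=
    (hu i).slope_mono_adjacent (Set.mem_univ s₁) (Set.mem_univ s₂) hs₁lt' hs₂gt'
  have slope_j : (u j σ - u j s₁) / (σ - s₁) ≤ (u j s₂ - u j σ) / (s₂ - σ) :=
    (hu j).slope_mono_adjacent (Set.mem_univ s₁) (Set.mem_univ s₂) hs₁lt' hs₂gt'
  have hmσ : m σ = u i σ := by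
    rw [hmdef]; simp only [← hσi, ← hσj, max_self]
  have hmσ' : m σ = u j σ := by rw [hmσ, ← hσi, hσj]
  have B1 : (m σ - m s₁) / (σ - s₁) ≤ (u j σ - u j s₁) / (σ - s₁) := by
    have h1 : u j s₁ ≤ m s₁ := le_max_right _ _
    have hnum : m σ - m s₁ ≤ u j σ - u j s₁ := by rw [hmσ']; linarith
    exact (div_le_div_iff_of_pos_right hd1).2 hnum
  have B2 : (u i s₂ - u i σ) / (s₂ - σ) ≤ (m s₂ - m σ) / (s₂ - σ) := by
    have h1 : u i s₂ ≤ m s₂ := le_max_left _ _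
    have hnum : u i s₂ - u i σ ≤ m s₂ - m σ := by rw [hmσ]; linarith
    exact (div_le_div_iff_of_pos_right hd2).2 hnum
  -- slope of the affine function L
  have hLslope1 : (L σ - L s₁) / (σ - s₁) = ψ 1 - ψ 0 := by
    have : L σ - L s₁ = (σ - s₁) * (ψ 1 - ψ 0) := by rw [hLdef]; ring
    rw [this]
    field_simp
  have hLslope2 : (L s₂ - L σ) / (s₂ - σ) = ψ 1 - ψ 0 := by
    have : L s₂ - L σ = (s₂ - σ) * (ψ 1 - ψ 0) := by rw [hLdef]; ring
    rw [this]
    field_simp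
  -- decompose the slopes of h
  have keyL : (h σ - h s₁) / (σ - s₁) =
      (m σ - m s₁) / (σ - s₁) + (φr σ - φr s₁) / (σ - s₁) +
        (u i σ - u i s₁) / (σ - s₁) - (ψ 1 - ψ 0) := by
    have e1 : h σ = m σ + φr σ + u i σ - L σ := by
      rw [hhdef]; simp only [hψdef]; rw [hsplit σ, ← hσi]
    have e2 : h s₁ = m s₁ + φr s₁ + u i s₁ - L s₁ := by
      rw [hhdef]; simp only [hψdef]; rw [hsplit s₁, ← hs₁F]
    rw [e1, e2, ← hLslope1]
    field_simp
    ring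
  have keyR : (h s₂ - h σ) / (s₂ - σ) =
      (m s₂ - m σ) / (s₂ - σ) + (φr s₂ - φr σ) / (s₂ - σ) +
        (u j s₂ - u j σ) / (s₂ - σ) - (ψ 1 - ψ 0) := by
    have e1 : h σ = m σ + φr σ + u j σ - L σ := by
      rw [hhdef]; simp only [hψdef]; rw [hsplit σ, ← hσj]
    have e2 : h s₂ = m s₂ + φr s₂ + u j s₂ - L s₂ := by
      rw [hhdef]; simp only [hψdef]; rw [hsplit s₂, ← hs₂F]
    rw [e1, e2, ← hLslope2]
    field_simp
    ring
  -- the contradiction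
  have hpos : 0 ≤ (h σ - h s₁) / (σ - s₁) := by
    apply div_nonneg _ (le_of_lt hd1)
    rw [hσM]; linarith
  have hneg : (h s₂ - h σ) / (s₂ - σ) < 0 := by
    apply div_neg_of_neg_of_pos _ hd2
    rw [hσM]; linarith
  have hmid : (h σ - h s₁) / (σ - s₁) ≤ (h s₂ - h σ) / (s₂ - σ) := by
    rw [keyL, keyR]
    linarith [slope_r, slope_i, slope_j, B1, B2]
  linarith

theorem isDC_of_continuous_selection
    (X : Type*) [NormedAddCommGroup X] [NormedSpace ℝ X] [CompleteSpace X]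
    (k : ℕ) (fs : Fin k → X → ℝ) (hfs : ∀ i, IsDC (fs i))
    (f : X → ℝ) (hf : Continuous f) (hsel : ∀ x : X, ∃ i, f x = fs i x) :
    IsDC f := by
  classical
  choose g h hg hh hgh using hfs
  set H : X → ℝ := fun x => ∑ i : Fin k, h i x with hHdef
  set G : Fin k → X → ℝ := fun i x => g i x + ∑ j ∈ Finset.univ.erase i, h j x with hGdef
  have hGconv : ∀ i, ConvexOn ℝ Set.univ (G i) := fun i =>
    (hg i).add (convexOn_finset_sum' _ _ fun j _ => hh j)
  have hHconv : ConvexOn ℝ Set.univ H := convexOn_finset_sum' _ _ fun j _ => hh j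
  have hGsel : ∀ x : X, ∃ i, f x + H x = G i x := by
    intro x
    obtain ⟨i, hi⟩ := hsel x
    refine ⟨i, ?_⟩
    have hsum : h i x + ∑ j ∈ Finset.univ.erase i, h j x = ∑ j : Fin k, h j x :=
      Finset.add_sum_erase Finset.univ (fun j => h j x) (Finset.mem_univ i)
    simp only [hGdef, hHdef]
    rw [hi, hgh i x, ← hsum]
    ring
  set φX : X → ℝ := fun x => ∑ p : Fin k × Fin k, max (G p.1 x) (G p.2 x) with hφXdef
  have hφXconv : ConvexOn ℝ Set.univ φX :=
    convexOn_finset_sum' _ _ fun p _ => convexOn_max' (hGconv p.1) (hGconv p.2)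
  have main : ConvexOn ℝ Set.univ (fun x => φX x + (f x + H x)) := by
    refine ⟨convex_univ, ?_⟩
    intro x _ y _ a b ha hb hab
    set γ : ℝ →ᵃ[ℝ] X := AffineMap.lineMap x y with hγdef
    have hγ0 : γ 0 = x := AffineMap.lineMap_apply_zero x y
    have hγ1 : γ 1 = y := AffineMap.lineMap_apply_one x y
    have hγb : γ b = a • x + b • y := by
      rw [hγdef, AffineMap.lineMap_apply_module]
      congr 1
      rw [show (1 : ℝ) - b = a by linarith]
    have huconv : ∀ i : Fin k, ConvexOn ℝ Set.univ (fun s : ℝ => G i (γ s)) := by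
      intro i
      have := (hGconv i).comp_affineMap γ
      rwa [Set.preimage_univ] at this
    have hHγconv : ConvexOn ℝ Set.univ (fun s : ℝ => H (γ s)) := by
      have := hHconv.comp_affineMap γ
      rwa [Set.preimage_univ] at this
    have hHγc : Continuous (fun s : ℝ => H (γ s)) :=
      continuousOn_univ.mp (hHγconv.continuousOn isOpen_univ)
    have hFc : Continuous (fun s : ℝ => f (γ s) + H (γ s)) :=
      (hf.comp AffineMap.lineMap_continuous).add hHγc
    have hsel' : ∀ s ∈ Set.Icc (0:ℝ) 1, ∃ i : Fin k,
        f (γ s) + H (γ s) = G i (γ s) := fun s _ => hGsel (γ s)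
    have hb01 : b ∈ Set.Icc (0:ℝ) 1 := ⟨hb, by linarith⟩
    have hcore := core_one_dim k (fun i s => G i (γ s))
      huconv (fun s => f (γ s) + H (γ s)) hFc hsel' hb01
    simp only [smul_eq_mul]
    rw [← hγb, ← hγ0, ← hγ1]
    calc φX (γ b) + (f (γ b) + H (γ b))
        ≤ (1 - b) * (φX (γ 0) + (f (γ 0) + H (γ 0))) +
            b * (φX (γ 1) + (f (γ 1) + H (γ 1))) := hcore
      _ = a * (φX (γ 0) + (f (γ 0) + H (γ 0))) +
            b * (φX (γ 1) + (f (γ 1) + H (γ 1))) := by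
          rw [show (1 : ℝ) - b = a by linarith]
  refine ⟨fun x => φX x + (f x + H x), fun x => φX x + H x, main, ?_, fun x => by ring⟩
  exact hφXconv.add hHconv
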